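/- Let O be the valuation ring of a finite extension of ℚ_p with valuation v normalized by v(p) = 1. Let t ≥ 1 and N ≥ 1 be integers and let M ∈ M_{Nt}(O) be a matrix (rows and columns indexed from 0) such that every entry in row i is divisible by p^{⌊i/t⌋} (i.e. v(m_{ij}) ≥ ⌊i/t⌋ for all j). Write det(I − X M) = 1 + c_1 X + c_2 X² + ... + c_{Nt} X^{Nt}. Then v(c_s) ≥ Σ_{i=0}^{s−1} ⌊i/t⌋ for every s. In particular v(c_{nt}) ≥ t·n(n−1)/2 for all n ≤ N, so the Newton polygon of det(I − XM) lies above the polygon with vertices (nt, t·n(n−1)/2). -/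

import Mathlib

/-- The reverse characteristic polynomial `det(I − X·M)` of a square matrix. -/
noncomputable def revCharPoly {E : Type*} [CommRing E] {n : ℕ}
    (M : Matrix (Fin n) (Fin n) E) : Polynomial E :=
  ((1 : Matrix (Fin n) (Fin n) (Polynomial E)) -
    (Polynomial.X : Polynomial E) • M.map Polynomial.C).det

open Finset Polynomial

/-- Coefficient of a product of polynomials. -/
lemma myCoeffProd {E : Type*} [CommSemiring E] {ι : Type*} [DecidableEq ι]
    (f : ι → Polynomial E) (d : ℕ) (s : Finset ι) :
    (∏ j ∈ s, f j).coeff d = ∑ l ∈ Finset.finsuppAntidiag s d, ∏ i ∈ s, (f i).coeff (l i) := by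
  have h : ((∏ j ∈ s, f j : Polynomial E) : PowerSeries E)
      = ∏ j ∈ s, ((f j : Polynomial E) : PowerSeries E) :=
    map_prod (Polynomial.coeToPowerSeries.ringHom) _ _
  have := congrArg (PowerSeries.coeff (R := E) d) h
  rw [Polynomial.coeff_coe, PowerSeries.coeff_prod] at this
  rw [this]
  refine Finset.sum_congr rfl fun l _ => Finset.prod_congr rfl fun i _ => ?_
  rw [Polynomial.coeff_coe]

lemma sum_div_le (t s : ℕ) (T : Finset ℕ) (hT : T.card = s) :
    ∑ i ∈ Finset.range s, i / t ≤ ∑ j ∈ T, j / t := by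
  classical
  set e := T.orderEmbOfFin hT with he
  have hle : ∀ k (h : k < s), k ≤ e ⟨k, h⟩ := by
    intro k
    induction k with
    | zero => intro h; exact Nat.zero_le _
    | succ k ih =>
      intro h
      have hk : k < s := Nat.lt_of_succ_lt h
      have := e.strictMono (show (⟨k, hk⟩ : Fin s) < ⟨k+1, h⟩ by simp)
      have := ih hk
      omega
  have himg : Finset.image (fun i => e i) Finset.univ = T := by
    ext j
    simp only [Finset.mem_image, Finset.mem_univ, true_and]
    constructor
    · rintro ⟨i, rfl⟩; exact T.orderEmbOfFin_mem hT i
    · intro hj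
      have : j ∈ Set.range e := by rw [T.range_orderEmbOfFin hT]; exact hj
      obtain ⟨i, hi⟩ := this; exact ⟨i, hi⟩
  calc ∑ i ∈ Finset.range s, i / t = ∑ i : Fin s, (i : ℕ) / t := by
        rw [Finset.sum_range]
    _ ≤ ∑ i : Fin s, (e i) / t := by
        refine Finset.sum_le_sum fun i _ => Nat.div_le_div_right ?_
        exact hle i.1 i.2
    _ = ∑ j ∈ T, j / t := by
        rw [← himg, Finset.sum_image (fun a _ b _ h => e.injective h)]

lemma gauss_div (t m : ℕ) : ∑ i ∈ Finset.range (m * t), i / t = t * (m * (m - 1) / 2) := by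
  rcases Nat.eq_zero_or_pos t with rfl | htpos
  · simp
  have key : ∀ m : ℕ, ∑ i ∈ Finset.range (m * t), i / t = t * ∑ k ∈ Finset.range m, k := by
    intro m
    induction m with
    | zero => simp
    | succ m ih =>
      have hmt : m * t ≤ (m + 1) * t := by nlinarith
      rw [Finset.range_eq_Ico, ← Finset.sum_Ico_consecutive _ (Nat.zero_le (m * t)) hmt,
        ← Finset.range_eq_Ico, ih, Finset.sum_range_succ]
      have : ∑ i ∈ Finset.Ico (m * t) ((m + 1) * t), i / t = t * m := by
        rw [Finset.sum_congr rfl (g := fun _ => m) (fun i hi => ?_)]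
        · rw [Finset.sum_const, Nat.card_Ico, smul_eq_mul]
          have h2 : (m + 1) * t - m * t = t := by rw [add_mul]; omega
          rw [h2, mul_comm]
        · rw [Finset.mem_Ico] at hi
          exact Nat.div_eq_of_lt_le (by simpa using hi.1) (by simpa [add_mul] using hi.2)
      rw [this]; ring
  rw [key, Finset.sum_range_id]


/-- let `E` be a finite extension of `ℚ_p` with the extension of the p-adic
norm (valuation `v` normalized by `v(p)=1`), `O` its valuation ring.  If `M ∈ M_{Nt}(O)` has
every entry of row `i` of valuation `≥ ⌊i/t⌋` (i.e. norm `≤ p^{-⌊i/t⌋}`), and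
`det(I − XM) = 1 + c₁X + …`, then `v(c_s) ≥ Σ_{i<s} ⌊i/t⌋` for every `s`; in particular
`v(c_{nt}) ≥ t·n(n−1)/2` for all `n ≤ N`, so the Newton polygon lies above the polygon with
vertices `(nt, t·n(n−1)/2)`. -/
theorem stmt_12 (p : ℕ) [Fact p.Prime] (E : Type*) [NormedField E]
    [Algebra ℚ_[p] E] [FiniteDimensional ℚ_[p] E]
    (hiso : ∀ x : ℚ_[p], ‖algebraMap ℚ_[p] E x‖ = ‖x‖)
    (t N : ℕ) (ht : 1 ≤ t) (hN : 1 ≤ N)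
    (M : Matrix (Fin (N * t)) (Fin (N * t)) E)
    (hM : ∀ i j, ‖M i j‖ ≤ (p : ℝ) ^ (-(((i : ℕ) / t : ℕ) : ℤ))) :
    (∀ s : ℕ, ‖(revCharPoly M).coeff s‖ ≤
        (p : ℝ) ^ (-((∑ i ∈ Finset.range s, (i / t) : ℕ) : ℤ))) ∧
    (∀ m : ℕ, m ≤ N → ‖(revCharPoly M).coeff (m * t)‖ ≤
        (p : ℝ) ^ (-((t * (m * (m - 1) / 2) : ℕ) : ℤ))) := by
  classical
  have hpp : p.Prime := Fact.out
  have hp1 : (1:ℝ) ≤ (p:ℝ) := by exact_mod_cast hpp.one_lt.le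
  have hp0 : (0:ℝ) < (p:ℝ) := by exact_mod_cast hpp.pos
  have hU : IsUltrametricDist E := by
    apply IsUltrametricDist.isUltrametricDist_of_forall_norm_natCast_le_one
    intro n
    have h1 : ((n : ℕ) : E) = algebraMap ℚ_[p] E ((n : ℕ) : ℚ_[p]) :=
      (map_natCast (algebraMap ℚ_[p] E) n).symm
    rw [h1, hiso]
    simpa using Padic.norm_int_le_one (p := p) (n : ℤ)
  have hmono : ∀ a b : ℕ, b ≤ a → (p:ℝ) ^ (-(a:ℤ)) ≤ (p:ℝ) ^ (-(b:ℤ)) := by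
    intro a b h
    apply zpow_le_zpow_right₀ hp1
    omega
  have hBnn : ∀ z : ℤ, (0:ℝ) ≤ (p:ℝ) ^ z := fun z => zpow_nonneg hp0.le z
  set A : Matrix (Fin (N*t)) (Fin (N*t)) (Polynomial E) :=
    (1 : Matrix (Fin (N*t)) (Fin (N*t)) (Polynomial E)) - (X : Polynomial E) • M.map C with hAdef
  have hA : ∀ (i j : Fin (N*t)) (k : ℕ), (A i j).coeff k =
      if k = 0 then (if i = j then 1 else 0) else if k = 1 then -(M i j) else 0 := by
    intro i j k
    rw [hAdef, Matrix.sub_apply, Matrix.smul_apply, Matrix.map_apply, Matrix.one_apply,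
      smul_eq_mul]
    by_cases hij : i = j <;> rcases k with _ | _ | k <;>
      simp [hij, Polynomial.coeff_sub, Polynomial.mul_coeff_zero, Polynomial.coeff_X_mul,
        Polynomial.coeff_one, Polynomial.coeff_C]
  have hzprod : ∀ (S : Finset (Fin (N*t))) (f : Fin (N*t) → ℕ),
      ∏ i ∈ S, (p:ℝ) ^ (-((f i : ℕ):ℤ)) = (p:ℝ) ^ (-((∑ i ∈ S, f i : ℕ):ℤ)) := by
    intro S f
    calc ∏ i ∈ S, (p:ℝ) ^ (-((f i : ℕ):ℤ)) = ∏ i ∈ S, ((p:ℝ) ^ (f i))⁻¹ := by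
          refine Finset.prod_congr rfl fun i _ => by rw [zpow_neg, zpow_natCast]
      _ = (∏ i ∈ S, (p:ℝ) ^ (f i))⁻¹ := by rw [Finset.prod_inv_distrib]
      _ = ((p:ℝ) ^ (∑ i ∈ S, f i))⁻¹ := by rw [Finset.prod_pow_eq_pow_sum]
      _ = (p:ℝ) ^ (-((∑ i ∈ S, f i : ℕ):ℤ)) := by rw [zpow_neg, zpow_natCast]
  have key : ∀ s : ℕ, ‖(revCharPoly M).coeff s‖ ≤
      (p : ℝ) ^ (-((∑ i ∈ Finset.range s, (i / t) : ℕ) : ℤ)) := by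
    intro s
    set c : ℕ := ∑ i ∈ Finset.range s, (i / t) with hc
    have hB0 : (0:ℝ) ≤ (p:ℝ) ^ (-(c:ℤ)) := hBnn _
    rw [show revCharPoly M = A.det from rfl, Matrix.det_apply, Polynomial.finset_sum_coeff]
    apply IsUltrametricDist.norm_sum_le_of_forall_le_of_nonneg hB0
    intro σ _
    rw [Polynomial.coeff_smul]
    have hsg : ∀ (u : ℤˣ) (x : E), ‖u • x‖ = ‖x‖ := by
      intro u x
      rcases Int.units_eq_one_or u with h | h <;> rw [h] <;> simp
    rw [hsg]
    rw [myCoeffProd]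
    apply IsUltrametricDist.norm_sum_le_of_forall_le_of_nonneg hB0
    intro μ hμ
    rw [Finset.mem_finsuppAntidiag] at hμ
    obtain ⟨hsum, -⟩ := hμ
    by_cases hbig : ∀ i, μ i ≤ 1
    · set S := μ.support with hS
      have hμ1 : ∀ i ∈ S, μ i = 1 := fun i hi =>
        le_antisymm (hbig i) (Nat.one_le_iff_ne_zero.mpr (Finsupp.mem_support_iff.mp hi))
      have hcard : S.card = s := by
        have h2 : ∑ i ∈ S, μ i = s := by
          rw [← hsum]
          exact Finset.sum_subset (Finset.subset_univ S) (fun i _ hi =>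
            Finsupp.notMem_support_iff.mp hi)
        calc S.card = ∑ i ∈ S, μ i := by
              rw [Finset.sum_congr rfl hμ1]; simp
          _ = s := h2
      have hterm : ∀ i : Fin (N*t), ‖(A (σ i) i).coeff (μ i)‖ ≤
          if i ∈ S then (p:ℝ) ^ (-((((σ i : ℕ)/t : ℕ)):ℤ)) else 1 := by
        intro i
        by_cases hi : i ∈ S
        · rw [hA, hμ1 i hi, if_pos hi]
          simpa using hM (σ i) i
        · have h0 : μ i = 0 := by
            by_contra h
            exact hi (Finsupp.mem_support_iff.mpr h)
          rw [hA, h0, if_neg hi]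
          simp only [if_pos rfl]
          by_cases h : σ i = i <;> simp [h]
      calc ‖∏ i, (A (σ i) i).coeff (μ i)‖ = ∏ i, ‖(A (σ i) i).coeff (μ i)‖ := norm_prod _ _
        _ ≤ ∏ i, (if i ∈ S then (p:ℝ) ^ (-((((σ i : ℕ)/t : ℕ)):ℤ)) else 1) :=
            Finset.prod_le_prod (fun _ _ => norm_nonneg _) (fun i _ => hterm i)
        _ = ∏ i ∈ S, (p:ℝ) ^ (-((((σ i : ℕ)/t : ℕ)):ℤ)) := by
            rw [Finset.prod_ite_mem, Finset.univ_inter]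
        _ = (p:ℝ) ^ (-((∑ i ∈ S, ((σ i : ℕ)/t) : ℕ):ℤ)) := hzprod S _
        _ ≤ (p:ℝ) ^ (-(c:ℤ)) := by
            apply hmono
            have hinj : Function.Injective (fun i : Fin (N*t) => ((σ i : ℕ))) :=
              Fin.val_injective.comp σ.injective
            have hcardT : (S.image (fun i => (σ i : ℕ))).card = s := by
              rw [Finset.card_image_of_injective _ hinj, hcard]
            have := sum_div_le t s (S.image (fun i => (σ i : ℕ))) hcardT
            rwa [Finset.sum_image (fun a _ b _ h => hinj h)] at this
    · push_neg at hbig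
      obtain ⟨i, hi⟩ := hbig
      have hz : (A (σ i) i).coeff (μ i) = 0 := by
        rw [hA]
        have h1 : μ i ≠ 0 := by omega
        have h2 : μ i ≠ 1 := by omega
        simp [h1, h2]
      rw [Finset.prod_eq_zero (Finset.mem_univ i) hz, norm_zero]
      exact hB0
  refine ⟨key, fun m hm => ?_⟩
  have h := key (m * t)
  rwa [gauss_div] at h
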